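/- Let S ⊆ ℝ^d be compact convex, P a probability measure on S, f : S → ℝ and c : S×S → [0,∞) continuous with c(x,x)=0, ρ > 0, ε, δ > 0, and π₀ a coupling with first marginal P satisfying E_{π₀} c < ρ. Suppose strong duality holds: the entropic WDRO value equals inf_{λ ≥ 0} D(λ) where D(λ) := λρ + (ε+λδ) E_{x∼P} log( E_{y∼π₀(·|x)} e^{(f(y)−λc(x,y))/(ε+λδ)} ), attained at some λ*. Then λ* ≤ 2 sup_S |f| / (ρ − E_{π₀} c). -/

import Mathlib

open MeasureTheory

/-- Jensen: `exp (∫ g) ≤ ∫ exp g` for a probability measure. -/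
lemma jensen_exp_aux {α : Type*} [MeasurableSpace α] (μ : Measure α) [IsProbabilityMeasure μ]
    {g : α → ℝ} (hg : Integrable g μ) (hexp : Integrable (fun y => Real.exp (g y)) μ) :
    Real.exp (∫ y, g y ∂μ) ≤ ∫ y, Real.exp (g y) ∂μ := by
  set m := ∫ y, g y ∂μ with hm
  have h1 : ∀ y, Real.exp m * (1 + (g y - m)) ≤ Real.exp (g y) := by
    intro y
    have h := Real.add_one_le_exp (g y - m)
    calc Real.exp m * (1 + (g y - m)) ≤ Real.exp m * Real.exp (g y - m) := by
          nlinarith [Real.exp_pos m]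
      _ = Real.exp (g y) := by rw [← Real.exp_add]; ring_nf
  have haux : Integrable (fun y => 1 + (g y - m)) μ :=
    (integrable_const 1).add (hg.sub (integrable_const m))
  have hint : Integrable (fun y => Real.exp m * (1 + (g y - m))) μ := haux.const_mul _
  have h2 := integral_mono hint hexp h1
  calc Real.exp m = Real.exp m * (1 + (m - m)) := by ring
    _ = ∫ y, Real.exp m * (1 + (g y - m)) ∂μ := by
        rw [MeasureTheory.integral_const_mul]
        have e1 : ∫ a, (1 + (g a - m)) ∂μ = (∫ _a, (1:ℝ) ∂μ) + ∫ a, (g a - m) ∂μ :=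
          integral_add (integrable_const 1) (hg.sub (integrable_const m))
        have e2 : ∫ a, (g a - m) ∂μ = m - m := by
          rw [integral_sub hg (integrable_const m)]; simp [← hm]
        rw [e1, e2]; simp
    _ ≤ _ := h2

/-- Bound on the optimal dual multiplier of the entropy-regularized WDRO problem:
if `λ*` minimizes the dual function
`D(λ) = λρ + (ε+λδ) E_{x∼P} log E_{y∼π₀(·|x)} e^{(f(y)−λc(x,y))/(ε+λδ)}` over `λ ≥ 0`,
then `λ* ≤ 2 sup_S |f| / (ρ − E_{π₀} c)`. -/
theorem stmt_10 {d : ℕ} (S : Set (EuclideanSpace ℝ (Fin d))) (hS : IsCompact S)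
    (P : Measure (EuclideanSpace ℝ (Fin d))) [IsProbabilityMeasure P] (hP : P S = 1)
    (f : EuclideanSpace ℝ (Fin d) → ℝ) (hf : ContinuousOn f S)
    (c : EuclideanSpace ℝ (Fin d) × EuclideanSpace ℝ (Fin d) → ℝ)
    (hc : ContinuousOn c (S ×ˢ S)) (hc_nonneg : ∀ z ∈ S ×ˢ S, 0 ≤ c z)
    (hc_diag : ∀ x ∈ S, c (x, x) = 0)
    (π₀ : Measure (EuclideanSpace ℝ (Fin d) × EuclideanSpace ℝ (Fin d)))
    [IsProbabilityMeasure π₀] (hπ₀S : π₀ (S ×ˢ S) = 1) (hπ₀fst : π₀.fst = P)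
    (ρ ε δ : ℝ) (hρ : 0 < ρ) (hε : 0 < ε) (hδ : 0 < δ)
    (hπ₀c : ∫ z, c z ∂π₀ < ρ)
    (D : ℝ → ℝ)
    (hD : ∀ lam : ℝ, D lam = lam * ρ + (ε + lam * δ) *
      ∫ x, Real.log (∫ y, Real.exp ((f y - lam * c (x, y)) / (ε + lam * δ))
        ∂(π₀.condKernel x)) ∂P)
    (lamstar : ℝ) (hlam_nonneg : 0 ≤ lamstar)
    (hmin : ∀ lam : ℝ, 0 ≤ lam → D lamstar ≤ D lam) :
    lamstar ≤ 2 * sSup ((fun y => |f y|) '' S) / (ρ - ∫ z, c z ∂π₀) := by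
  classical
  set M := sSup ((fun y => |f y|) '' S) with hMdef
  set Ic := ∫ z, c z ∂π₀ with hIcdef
  have hSne : S.Nonempty := by
    by_contra h
    rw [Set.not_nonempty_iff_eq_empty] at h
    simp [h] at hP
  have hSm : MeasurableSet S := hS.isClosed.measurableSet
  have hSSm : MeasurableSet (S ×ˢ S) := hSm.prod hSm
  have hMbdd : BddAbove ((fun y => |f y|) '' S) :=
    (hS.image_of_continuousOn hf.abs).bddAbove
  have hMle : ∀ y ∈ S, |f y| ≤ M := fun y hy => le_csSup hMbdd ⟨y, hy, rfl⟩
  obtain ⟨x₀, hx₀⟩ := hSne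
  have hM0 : 0 ≤ M := le_trans (abs_nonneg _) (hMle x₀ hx₀)
  set C := sSup (c '' (S ×ˢ S)) with hCdef
  have hCbdd : BddAbove (c '' (S ×ˢ S)) :=
    ((hS.prod hS).image_of_continuousOn hc).bddAbove
  have hCle : ∀ z ∈ S ×ˢ S, c z ≤ C := fun z hz => le_csSup hCbdd ⟨z, hz, rfl⟩
  have hC0 : 0 ≤ C :=
    le_trans (hc_nonneg (x₀, x₀) ⟨hx₀, hx₀⟩) (hCle (x₀, x₀) ⟨hx₀, hx₀⟩)
  -- a.e. facts
  have hPSc : P Sᶜ = 0 := by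
    rw [measure_compl hSm (measure_ne_top P S), hP, measure_univ]; simp
  have hPS : ∀ᵐ x ∂P, x ∈ S := by
    rw [ae_iff]; exact hPSc
  have hπ₀Sc : π₀ ((S ×ˢ S)ᶜ) = 0 := by
    rw [measure_compl hSSm (measure_ne_top π₀ _), hπ₀S, measure_univ]; simp
  have hπ₀mem : ∀ᵐ z ∂π₀, z ∈ S ×ˢ S := by
    rw [ae_iff]; exact hπ₀Sc
  have hπ₀restrict : π₀.restrict (S ×ˢ S) = π₀ :=
    Measure.restrict_eq_self_of_ae_mem hπ₀mem
  -- conditional kernel concentrated on S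
  have hκS : ∀ᵐ x ∂P, π₀.condKernel x Sᶜ = 0 := by
    have h1 : ∫⁻ b, π₀.condKernel b Sᶜ ∂π₀.fst = π₀ (Set.univ ×ˢ Sᶜ) := by
      rw [← Measure.setLIntegral_condKernel_eq_measure_prod MeasurableSet.univ hSm.compl]
      simp
    have h2 : π₀ (Set.univ ×ˢ Sᶜ) = 0 := by
      refine measure_mono_null ?_ hπ₀Sc
      intro z hz
      exact fun hmem => hz.2 hmem.2
    rw [hπ₀fst] at h1
    have h3 : ∫⁻ b, π₀.condKernel b Sᶜ ∂P = 0 := by rw [h1, h2]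
    have := (lintegral_eq_zero_iff (ProbabilityTheory.Kernel.measurable_coe _ hSm.compl)).mp h3
    filter_upwards [this] with x hx using hx
  have hκprob : ∀ x, IsProbabilityMeasure (π₀.condKernel x) := fun x => inferInstance
  -- nonnegativity of Ic
  have hIc0 : 0 ≤ Ic := by
    rw [hIcdef]
    refine integral_nonneg_of_ae ?_
    filter_upwards [hπ₀mem] with z hz using hc_nonneg z hz
  -- ### Upper bound : D lamstar ≤ M
  have hub : D lamstar ≤ M := by
    refine le_trans (hmin 0 le_rfl) ?_
    rw [hD 0]
    set F0 : EuclideanSpace ℝ (Fin d) → ℝ := fun x =>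
      Real.log (∫ y, Real.exp ((f y - 0 * c (x, y)) / (ε + 0 * δ)) ∂(π₀.condKernel x)) with hF0
    rw [zero_mul, zero_add, zero_mul, add_zero]
    by_cases hint : Integrable F0 P
    · have hbound : ∀ᵐ x ∂P, F0 x ≤ M / ε := by
        filter_upwards [hκS] with x hx
        have hmemS : ∀ᵐ y ∂(π₀.condKernel x), y ∈ S := by
          rw [ae_iff]; exact hx
        have hXnn : 0 ≤ ∫ y, Real.exp ((f y - 0 * c (x, y)) / (ε + 0 * δ)) ∂(π₀.condKernel x) :=
          integral_nonneg fun y => (Real.exp_pos _).le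
        have hXle : ∫ y, Real.exp ((f y - 0 * c (x, y)) / (ε + 0 * δ)) ∂(π₀.condKernel x)
            ≤ Real.exp (M / ε) := by
          by_cases hi : Integrable
              (fun y => Real.exp ((f y - 0 * c (x, y)) / (ε + 0 * δ))) (π₀.condKernel x)
          · have hle : ∀ᵐ y ∂(π₀.condKernel x),
                Real.exp ((f y - 0 * c (x, y)) / (ε + 0 * δ)) ≤ Real.exp (M / ε) := by
              filter_upwards [hmemS] with y hy
              apply Real.exp_le_exp.mpr
              have hnum : f y - 0 * c (x, y) ≤ M := by
                have := (abs_le.mp (hMle y hy)).2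
                linarith
              have hden : (ε + 0 * δ) = ε := by ring
              rw [hden]
              gcongr
            calc _ ≤ ∫ _y, Real.exp (M / ε) ∂(π₀.condKernel x) :=
                  integral_mono_ae hi (integrable_const _) hle
              _ = Real.exp (M / ε) := by simp
          · rw [integral_undef hi]; exact (Real.exp_pos _).le
        rcases eq_or_lt_of_le hXnn with hX0 | hXpos
        · rw [hF0]
          simp only [← hX0, Real.log_zero]
          positivity
        · rw [hF0]
          exact (Real.log_le_iff_le_exp hXpos).mpr hXle
      have : ∫ x, F0 x ∂P ≤ M / ε := by
        calc ∫ x, F0 x ∂P ≤ ∫ _x, M / ε ∂P := integral_mono_ae hint (integrable_const _) hbound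
          _ = M / ε := by simp
      calc ε * ∫ x, F0 x ∂P ≤ ε * (M / ε) := by
            exact mul_le_mul_of_nonneg_left this hε.le
        _ = M := by field_simp
    · rw [integral_undef hint]
      simpa using hM0
  -- ### Lower bound : lamstar * (ρ - Ic) - M ≤ D lamstar
  set σ := ε + lamstar * δ with hσdef
  have hσ : 0 < σ := by positivity
  have hlb : lamstar * (ρ - Ic) - M ≤ D lamstar := by
    rw [hD lamstar, ← hσdef]
    set F : EuclideanSpace ℝ (Fin d) → ℝ := fun x =>
      Real.log (∫ y, Real.exp ((f y - lamstar * c (x, y)) / σ) ∂(π₀.condKernel x)) with hF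
    by_cases hint : Integrable F P
    · -- the pair function h
      set h : EuclideanSpace ℝ (Fin d) × EuclideanSpace ℝ (Fin d) → ℝ :=
        fun z => f z.2 - lamstar * c z with hh
      have hh_cont : ContinuousOn h (S ×ˢ S) := by
        refine ContinuousOn.sub ?_ (continuousOn_const.mul hc)
        exact hf.comp continuous_snd.continuousOn fun z hz => hz.2
      have hh_aesm : AEStronglyMeasurable h π₀ := by
        rw [← hπ₀restrict]
        exact hh_cont.aestronglyMeasurable hSSm
      have hh_bdd : ∀ᵐ z ∂π₀, ‖h z‖ ≤ M + lamstar * C := by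
        filter_upwards [hπ₀mem] with z hz
        rw [hh, Real.norm_eq_abs]
        have h1 := hMle z.2 hz.2
        have h2 := hCle z hz
        have h3 := hc_nonneg z hz
        have : |f z.2 - lamstar * c z| ≤ |f z.2| + lamstar * |c z| := by
          refine (abs_sub _ _).trans ?_
          rw [abs_mul, abs_of_nonneg hlam_nonneg]
        refine this.trans ?_
        rw [abs_of_nonneg h3]
        have := mul_le_mul_of_nonneg_left h2 hlam_nonneg
        linarith
      have hh_int : Integrable h π₀ :=
        Integrable.mono' (integrable_const _) hh_aesm hh_bdd
      -- inner integral function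
      have hh_int_fst : Integrable (fun x => ∫ y, h (x, y) ∂(π₀.condKernel x)) P := by
        have := hh_int.integral_condKernel
        rwa [hπ₀fst] at this
      have hh_ae_int : ∀ᵐ x ∂P, Integrable (fun y => h (x, y)) (π₀.condKernel x) := by
        have := hh_int.condKernel_ae
        rwa [hπ₀fst] at this
      -- Jensen pointwise
      have hJ : ∀ᵐ x ∂P, (∫ y, h (x, y) ∂(π₀.condKernel x)) / σ ≤ F x := by
        filter_upwards [hPS, hκS, hh_ae_int] with x hxS hx hxi
        have hmemS : ∀ᵐ y ∂(π₀.condKernel x), y ∈ S := by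
          rw [ae_iff]; exact hx
        set g : EuclideanSpace ℝ (Fin d) → ℝ := fun y => (f y - lamstar * c (x, y)) / σ with hg
        have hgi : Integrable g (π₀.condKernel x) := hxi.div_const σ
        have hgexp_bdd : ∀ᵐ y ∂(π₀.condKernel x), ‖Real.exp (g y)‖ ≤ Real.exp (M / σ) := by
          filter_upwards [hmemS] with y hy
          rw [Real.norm_eq_abs, abs_of_nonneg (Real.exp_pos _).le]
          simp only [hg]
          apply Real.exp_le_exp.mpr
          have h1 := (abs_le.mp (hMle y hy)).2
          have h2 := hc_nonneg (x, y) ⟨hxS, hy⟩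
          have hnum : f y - lamstar * c (x, y) ≤ M := by nlinarith
          gcongr
        have hgexp : Integrable (fun y => Real.exp (g y)) (π₀.condKernel x) :=
          Integrable.mono' (integrable_const _)
            (Real.continuous_exp.comp_aestronglyMeasurable hgi.1) hgexp_bdd
        have hjen := jensen_exp_aux (π₀.condKernel x) hgi hgexp
        have hXpos : 0 < ∫ y, Real.exp (g y) ∂(π₀.condKernel x) :=
          lt_of_lt_of_le (Real.exp_pos _) hjen
        have hlog : ∫ y, g y ∂(π₀.condKernel x) ≤
            Real.log (∫ y, Real.exp (g y) ∂(π₀.condKernel x)) :=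
          (Real.le_log_iff_exp_le hXpos).mpr hjen
        have hgeq : ∫ y, g y ∂(π₀.condKernel x)
            = (∫ y, h (x, y) ∂(π₀.condKernel x)) / σ := by
          rw [hg, ← integral_div]
        rw [hgeq] at hlog
        exact hlog
      -- integrate
      have hFge : (∫ z, h z ∂π₀) / σ ≤ ∫ x, F x ∂P := by
        have e1 : ∫ x, (∫ y, h (x, y) ∂(π₀.condKernel x)) / σ ∂P
            = (∫ z, h z ∂π₀) / σ := by
          rw [integral_div]
          congr 1
          have := Measure.integral_condKernel hh_int
          rwa [hπ₀fst] at this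
        rw [← e1]
        exact integral_mono_ae (hh_int_fst.div_const σ) hint hJ
      -- value of ∫ h
      have hfsnd_int : Integrable (fun z => f z.2) π₀ := by
        refine Integrable.mono' (integrable_const M) ?_ ?_
        · rw [← hπ₀restrict]
          exact (hf.comp continuous_snd.continuousOn fun z hz => hz.2).aestronglyMeasurable hSSm
        · filter_upwards [hπ₀mem] with z hz
          rw [Real.norm_eq_abs]; exact hMle z.2 hz.2
      have hc_int : Integrable c π₀ := by
        refine Integrable.mono' (integrable_const C) ?_ ?_
        · rw [← hπ₀restrict]
          exact hc.aestronglyMeasurable hSSm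
        · filter_upwards [hπ₀mem] with z hz
          rw [Real.norm_eq_abs, abs_of_nonneg (hc_nonneg z hz)]
          exact hCle z hz
      have hsplit : ∫ z, h z ∂π₀ = (∫ z, f z.2 ∂π₀) - lamstar * Ic := by
        rw [hh, integral_sub hfsnd_int (hc_int.const_mul lamstar), integral_const_mul, hIcdef]
      have hfsnd_ge : -M ≤ ∫ z, f z.2 ∂π₀ := by
        have : ∫ _z, (-M : ℝ) ∂π₀ ≤ ∫ z, f z.2 ∂π₀ := by
          refine integral_mono_ae (integrable_const _) hfsnd_int ?_
          filter_upwards [hπ₀mem] with z hz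
          exact neg_le_of_abs_le (hMle z.2 hz.2)
        simpa using this
      have hhge : -M - lamstar * Ic ≤ ∫ z, h z ∂π₀ := by
        rw [hsplit]; linarith
      have h5 : ∫ z, h z ∂π₀ ≤ σ * ∫ x, F x ∂P := by
        calc ∫ z, h z ∂π₀ = σ * ((∫ z, h z ∂π₀) / σ) := by field_simp
          _ ≤ σ * ∫ x, F x ∂P := mul_le_mul_of_nonneg_left hFge hσ.le
      have hexpand : lamstar * (ρ - Ic) = lamstar * ρ - lamstar * Ic := by ring
      linarith
    · rw [integral_undef hint, mul_zero, add_zero]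
      nlinarith [mul_nonneg hlam_nonneg hIc0]
  -- ### conclude
  have hkey : lamstar * (ρ - Ic) ≤ 2 * M := by linarith
  have hpos : 0 < ρ - Ic := by linarith
  rw [le_div_iff₀ hpos]
  exact hkey
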